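/- Suppose a BFS is run from a root r in a connected graph G with n ≥ 2 vertices, and let e = (u,v) be the first non-tree (cross) edge encountered. Then the cycle formed by e together with the tree paths from u and v to their lowest common ancestor has length at most 2·⌈log₂ n⌉ + 1, provided every vertex of G has degree at least 3. -/

import Mathlib

open SimpleGraph

/-- In a tree, adjacent vertices have different distances from any root. -/
private lemma aux_adj_dist_ne {V : Type*} [DecidableEq V] {T : SimpleGraph V} (hT : T.IsTree)
    (r : V) {a b : V} (hab : T.Adj a b) : T.dist r a ≠ T.dist r b := by
  intro h
  obtain ⟨p, hp, hlen⟩ := hT.isConnected.exists_path_of_dist r a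
  have hbns : b ∉ p.support := by
    intro hb
    have h1 : T.dist r b ≤ (p.takeUntil b hb).length := SimpleGraph.dist_le _
    have h2 := p.length_takeUntil_le hb
    have h3 := congrArg SimpleGraph.Walk.length (p.take_spec hb)
    rw [SimpleGraph.Walk.length_append] at h3
    have h4 : (p.dropUntil b hb).length = 0 := by omega
    exact hab.ne' (SimpleGraph.Walk.eq_of_length_eq_zero h4)
  have hq : (p.concat hab).IsPath := by
    rw [← SimpleGraph.Walk.isPath_reverse_iff, SimpleGraph.Walk.reverse_concat,
      SimpleGraph.Walk.cons_isPath_iff]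
    exact ⟨hp.reverse, by simpa [SimpleGraph.Walk.support_reverse] using hbns⟩
  obtain ⟨p', hp', hlen'⟩ := hT.isConnected.exists_path_of_dist r b
  have heq : p.concat hab = p' := (hT.existsUnique_path r b).unique hq hp'
  have := congrArg SimpleGraph.Walk.length heq
  rw [SimpleGraph.Walk.length_concat] at this
  omega

/-- In a tree, a vertex has a unique neighbor one level closer to the root. -/
private lemma aux_unique_parent {V : Type*} [DecidableEq V] {T : SimpleGraph V} (hT : T.IsTree)
    (r : V) {x a b : V} (hxa : T.Adj x a) (hxb : T.Adj x b)
    (ha : T.dist r a + 1 = T.dist r x) (hb : T.dist r b + 1 = T.dist r x) : a = b := by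
  obtain ⟨pa, hpa, hla⟩ := hT.isConnected.exists_path_of_dist a r
  obtain ⟨pb, hpb, hlb⟩ := hT.isConnected.exists_path_of_dist b r
  have hqa : (SimpleGraph.Walk.cons hxa pa).IsPath := by
    apply SimpleGraph.Walk.isPath_of_length_eq_dist
    rw [SimpleGraph.Walk.length_cons, hla, SimpleGraph.dist_comm (u := a),
      SimpleGraph.dist_comm (u := x)]
    exact ha
  have hqb : (SimpleGraph.Walk.cons hxb pb).IsPath := by
    apply SimpleGraph.Walk.isPath_of_length_eq_dist
    rw [SimpleGraph.Walk.length_cons, hlb, SimpleGraph.dist_comm (u := b),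
      SimpleGraph.dist_comm (u := x)]
    exact hb
  have heq : SimpleGraph.Walk.cons hxa pa = SimpleGraph.Walk.cons hxb pb :=
    (hT.existsUnique_path x r).unique hqa hqb
  have hs := congrArg SimpleGraph.Walk.support heq
  rw [SimpleGraph.Walk.support_cons, SimpleGraph.Walk.support_cons,
    pa.support_eq_cons, pb.support_eq_cons] at hs
  simp only [List.cons.injEq] at hs
  exact hs.2.1

theorem stmt_15 {V : Type*} [Fintype V] [DecidableEq V] (G : SimpleGraph V)
    [DecidableRel G.Adj] (hG : G.Connected) (hn : 2 ≤ Fintype.card V)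
    (hdeg : ∀ w : V, 3 ≤ G.degree w)
    (r : V) (T : SimpleGraph V) (hTle : T ≤ G) (hTtree : T.IsTree)
    (hBFS : ∀ w : V, T.dist r w = G.dist r w)
    (u v : V) (huv : G.Adj u v) (hnt : ¬ T.Adj u v)
    (hfirst : ∀ a b : V, G.Adj a b → ¬ T.Adj a b →
      max (G.dist r u) (G.dist r v) ≤ max (G.dist r a) (G.dist r b)) :
    ∃ C : G.Walk u u, C.IsCycle ∧ s(u, v) ∈ C.edges ∧
      (∀ f ∈ C.edges, f ≠ s(u, v) → f ∈ T.edgeSet) ∧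
      C.length ≤ 2 * Nat.clog 2 (Fintype.card V) + 1 := by
  classical
  have hTconn := hTtree.isConnected
  set d := max (G.dist r u) (G.dist r v) with hd
  -- adjacency in T changes distance from r by exactly one
  have hadj_dist : ∀ a b : V, T.Adj a b →
      (G.dist r b = G.dist r a + 1 ∨ G.dist r a = G.dist r b + 1) := by
    intro a b hab
    have e1 : T.dist a b = 1 := SimpleGraph.dist_eq_one_iff_adj.mpr hab
    have e2 : T.dist b a = 1 := SimpleGraph.dist_eq_one_iff_adj.mpr hab.symm
    have t1 : T.dist r b ≤ T.dist r a + T.dist a b := hTconn.dist_triangle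
    have t2 : T.dist r a ≤ T.dist r b + T.dist b a := hTconn.dist_triangle
    have hne := aux_adj_dist_ne hTtree r hab
    rw [hBFS a, hBFS b] at t1 t2 hne
    omega
  -- all edges well below level d are tree edges
  have halltree : ∀ a b : V, G.dist r a + 2 ≤ d → G.Adj a b → T.Adj a b := by
    intro a b hle hab
    by_contra hnad
    have h1 := hfirst a b hab hnad
    have h2 : G.dist r b ≤ G.dist r a + 1 := by
      have t := hG.dist_triangle (u := r) (v := a) (w := b)
      have e : G.dist a b = 1 := SimpleGraph.dist_eq_one_iff_adj.mpr hab
      omega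
    have h3 : max (G.dist r a) (G.dist r b) ≤ G.dist r a + 1 :=
      max_le (by omega) h2
    exact absurd (h1.trans h3) (by omega)
  set L : ℕ → Finset V := fun k => Finset.univ.filter (fun w => G.dist r w = k) with hL
  set C : V → ℕ → Finset V := fun w k =>
    Finset.univ.filter (fun x => T.Adj w x ∧ G.dist r x = k + 1) with hC
  -- every vertex at level k (k+2 ≤ d) has at least two tree-children
  have hchild : ∀ k : ℕ, k + 2 ≤ d → ∀ w ∈ L k, 2 ≤ (C w k).card := by
    intro k hk2 w hw
    simp only [hL, Finset.mem_filter] at hw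
    obtain ⟨-, hwk⟩ := hw
    set P : Finset V := Finset.univ.filter (fun x => T.Adj w x ∧ G.dist r x + 1 = k) with hP
    have hsub : G.neighborFinset w ⊆ C w k ∪ P := by
      intro x hx
      rw [SimpleGraph.mem_neighborFinset] at hx
      have hTwx : T.Adj w x := halltree w x (by omega) hx
      have hdd := hadj_dist w x hTwx
      simp only [hC, hP, Finset.mem_union, Finset.mem_filter, Finset.mem_univ, true_and]
      rcases hdd with h | h
      · exact Or.inl ⟨hTwx, by omega⟩
      · exact Or.inr ⟨hTwx, by omega⟩
    have hPone : P.card ≤ 1 := by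
      rw [Finset.card_le_one]
      intro a ha b hb
      simp only [hP, Finset.mem_filter, Finset.mem_univ, true_and] at ha hb
      refine aux_unique_parent hTtree r ha.1 hb.1 ?_ ?_ <;>
        rw [hBFS, hBFS] <;> omega
    have h3 : 3 ≤ (G.neighborFinset w).card := hdeg w
    have h4 := Finset.card_le_card hsub
    have h5 := Finset.card_union_le (C w k) P
    omega
  -- children sets of distinct vertices at the same level are disjoint
  have hdouble : ∀ k : ℕ, k + 2 ≤ d → 2 * (L k).card ≤ (L (k + 1)).card := by
    intro k hk2
    have hdisj : ∀ w1 ∈ L k, ∀ w2 ∈ L k, w1 ≠ w2 → Disjoint (C w1 k) (C w2 k) := by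
      intro w1 hw1 w2 hw2 hne
      rw [Finset.disjoint_left]
      intro x hx1 hx2
      simp only [hC, Finset.mem_filter, Finset.mem_univ, true_and] at hx1 hx2
      simp only [hL, Finset.mem_filter, Finset.mem_univ, true_and] at hw1 hw2
      exact hne (aux_unique_parent hTtree r hx1.1.symm hx2.1.symm
        (by rw [hBFS, hBFS]; omega) (by rw [hBFS, hBFS]; omega))
    have hbi : (L k).biUnion (fun w => C w k) ⊆ L (k + 1) := by
      intro x hx
      simp only [Finset.mem_biUnion] at hx
      obtain ⟨w, -, hxw⟩ := hx
      simp only [hC, Finset.mem_filter, Finset.mem_univ, true_and] at hxw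
      simp only [hL, Finset.mem_filter, Finset.mem_univ, true_and]
      exact hxw.2
    calc 2 * (L k).card = ∑ _w ∈ L k, 2 := by simp [mul_comm]
      _ ≤ ∑ w ∈ L k, (C w k).card := Finset.sum_le_sum (fun w hw => hchild k hk2 w hw)
      _ = ((L k).biUnion (fun w => C w k)).card := (Finset.card_biUnion hdisj).symm
      _ ≤ (L (k + 1)).card := Finset.card_le_card hbi
  -- levels grow geometrically
  have hgrow : ∀ k : ℕ, 1 ≤ k → k + 1 ≤ d → 2 ^ k < (L k).card := by
    intro k
    induction k with
    | zero => omega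
    | succ k ih =>
      intro _ hk
      rcases Nat.eq_zero_or_pos k with hk0 | hk1
      · subst hk0
        have hsub : G.neighborFinset r ⊆ L (0 + 1) := by
          intro x hx
          rw [SimpleGraph.mem_neighborFinset] at hx
          simp only [hL, Finset.mem_filter, Finset.mem_univ, true_and]
          exact SimpleGraph.dist_eq_one_iff_adj.mpr hx
        have h3 : 3 ≤ (L (0 + 1)).card := le_trans (hdeg r) (Finset.card_le_card hsub)
        have h2 : (2:ℕ) ^ (0 + 1) = 2 := by norm_num
        omega
      · have h1 := ih hk1 (by omega)
        have h2 := hdouble k (by omega)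
        calc 2 ^ (k + 1) = 2 * 2 ^ k := by ring
          _ < 2 * (L k).card := by omega
          _ ≤ (L (k + 1)).card := h2
  -- conclude d ≤ clog 2 n
  have hdlog : d ≤ Nat.clog 2 (Fintype.card V) := by
    have hpow : 2 ^ (d - 1) < Fintype.card V := by
      rcases Nat.lt_or_ge d 2 with hd2 | hd2
      · have h0 : d - 1 = 0 := by omega
        rw [h0, pow_zero]
        omega
      · have h := hgrow (d - 1) (by omega) (by omega)
        have hle : (L (d - 1)).card ≤ Fintype.card V := by
          simp only [hL]
          exact (Finset.card_filter_le Finset.univ _).trans_eq Finset.card_univ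
        omega
    have := (Nat.lt_clog_iff_pow_lt (by norm_num)).mpr hpow
    omega
  -- construct the cycle
  obtain ⟨p, hp, hlen⟩ := hTconn.exists_path_of_dist v u
  set q : G.Walk v u := p.mapLe hTle with hq
  have hqe : q.edges = p.edges := by
    rw [hq, SimpleGraph.Walk.mapLe, SimpleGraph.Walk.edges_map]
    have hid : (⇑(SimpleGraph.Hom.ofLE hTle)) = id := rfl
    rw [hid, Sym2.map_id, List.map_id]
  have hpT : ∀ f ∈ p.edges, f ∈ T.edgeSet := fun f hf => p.edges_subset_edgeSet hf
  have hnot : s(u, v) ∉ q.edges := by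
    rw [hqe]
    intro hmem
    exact hnt (hpT _ hmem)
  refine ⟨SimpleGraph.Walk.cons huv q, ?_, ?_, ?_, ?_⟩
  · rw [SimpleGraph.Walk.cons_isCycle_iff]
    exact ⟨hp.mapLe hTle, hnot⟩
  · simp [SimpleGraph.Walk.edges_cons]
  · intro f hf hfne
    rw [SimpleGraph.Walk.edges_cons] at hf
    rcases List.mem_cons.mp hf with h | h
    · exact absurd h hfne
    · exact hpT f (hqe ▸ h)
  · have hql : q.length = p.length := by simp [hq, SimpleGraph.Walk.mapLe]
    have htri : T.dist v u ≤ T.dist v r + T.dist r u := hTconn.dist_triangle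
    rw [SimpleGraph.dist_comm (G := T) (u := v) (v := r), hBFS v, hBFS u] at htri
    have hmu : G.dist r u ≤ d := le_max_left _ _
    have hmv : G.dist r v ≤ d := le_max_right _ _
    rw [SimpleGraph.Walk.length_cons, hql, hlen]
    omega
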